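/- Let H ≤ ℤ^d be a subgroup of finite index and let R ⊆ ℤ^d be a set of ℤ^d-Bohr recurrence. Then R ∩ H is a set of ℤ^d-Bohr recurrence; that is, (R ∩ H) ∩ V ≠ ∅ for every Bohr₀ set V ⊆ ℤ^d. -/

import Mathlib

open scoped BigOperators

noncomputable section

/-- Distance from a real number to the nearest integer. -/
def torusNorm (x : ℝ) : ℝ := |x - round x|

/-- A subset `V ⊆ ℤ^d` is a Bohr₀ set if there are `k ≥ 1`, vectors `α₁, …, α_k ∈ ℝ^d`
and `ε > 0` such that every `n ∈ ℤ^d` with `‖n·αⱼ‖_𝕋 < ε` for all `j` belongs to `V`. -/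
def IsBohr0 (d : ℕ) (V : Set (Fin d → ℤ)) : Prop :=
  ∃ k : ℕ, 1 ≤ k ∧ ∃ α : Fin k → Fin d → ℝ, ∃ ε : ℝ, 0 < ε ∧
    ∀ n : Fin d → ℤ, (∀ j : Fin k, torusNorm (∑ i, (n i : ℝ) * α j i) < ε) → n ∈ V

/-- `R ⊆ ℤ^d` is a set of `ℤ^d`-Bohr recurrence if it meets every Bohr₀ set. -/
def IsBohrRecurrence (d : ℕ) (R : Set (Fin d → ℤ)) : Prop :=
  ∀ V : Set (Fin d → ℤ), IsBohr0 d V → (R ∩ V).Nonempty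

lemma dvd_of_torusNorm_lt (m : ℕ) (hm : 0 < m) (n : ℤ)
    (h : torusNorm ((n : ℝ) / m) < 1 / m) : (m : ℤ) ∣ n := by
  set r := round ((n : ℝ) / m) with hr
  have hmR : (0 : ℝ) < m := by exact_mod_cast hm
  have h1 : |(n : ℝ) - m * r| < 1 := by
    have : |(n : ℝ) - m * r| = m * |(n : ℝ) / m - r| := by
      rw [← abs_of_pos hmR, ← abs_mul]
      congr 1
      field_simp
      rw [abs_of_pos hmR]; ring
    rw [this]
    have := h
    unfold torusNorm at this
    calc (m : ℝ) * |(n : ℝ) / m - r| < m * (1 / m) := by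
          exact mul_lt_mul_of_pos_left this hmR
      _ = 1 := by field_simp
  have h2 : |(n - m * r : ℤ)| < 1 := by
    have : |((n - m * r : ℤ) : ℝ)| < 1 := by push_cast; exact h1
    exact_mod_cast this
  have h3 := abs_lt.mp h2
  exact ⟨r, by omega⟩

/-- For a finite-index subgroup `H ≤ ℤ^d`, the intersection of a set of `ℤ^d`-Bohr
recurrence with `H` is again a set of `ℤ^d`-Bohr recurrence. -/
theorem bohr_recurrence_inter_finite_index_subgroup
    (d : ℕ) (H : AddSubgroup (Fin d → ℤ)) (hH : H.FiniteIndex)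
    (R : Set (Fin d → ℤ)) (hR : IsBohrRecurrence d R) :
    IsBohrRecurrence d (R ∩ (H : Set (Fin d → ℤ))) := by
  intro V hV
  obtain ⟨k, hk, α, ε, hε, hαε⟩ := hV
  set m := H.index with hm
  have hmpos : 0 < m := Nat.pos_of_ne_zero hH.index_ne_zero
  have hmR : (0 : ℝ) < m := by exact_mod_cast hmpos
  -- the combined Bohr₀ set
  set W : Set (Fin d → ℤ) := V ∩ {n | ∀ i, (m : ℤ) ∣ n i} with hW
  have hWB : IsBohr0 d W := by
    refine ⟨k + d, by omega, Fin.addCases α (fun i0 i => if i = i0 then 1 / (m : ℝ) else 0),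
      min ε (1 / m), lt_min hε (by positivity), ?_⟩
    intro n hn
    constructor
    · apply hαε
      intro j
      have := hn (Fin.castAdd d j)
      simp only [Fin.addCases_left] at this
      exact lt_of_lt_of_le this (min_le_left _ _)
    · intro i0
      have := hn (Fin.natAdd k i0)
      simp only [Fin.addCases_right] at this
      have hsum : (∑ i, (n i : ℝ) * if i = i0 then 1 / (m : ℝ) else 0) = (n i0 : ℝ) / m := by
        rw [Finset.sum_eq_single i0]
        · simp; ring
        · intro b _ hb; simp [hb]
        · intro hb; simp at hb
      rw [hsum] at this
      exact dvd_of_torusNorm_lt m hmpos (n i0)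
        (lt_of_lt_of_le this (min_le_right _ _))
  obtain ⟨n, hnR, hnV, hnDvd⟩ := hR W hWB
  refine ⟨n, ⟨hnR, ?_⟩, hnV⟩
  -- n = m • v with v i = n i / m, hence n ∈ H
  have hv : n = m • fun i => n i / m := by
    funext i
    obtain ⟨c, hc⟩ := hnDvd i
    simp only [Pi.smul_apply, nsmul_eq_mul, hc]
    rw [Int.mul_ediv_cancel_left _ (by exact_mod_cast hmpos.ne')]
  rw [hv, hm]
  exact H.nsmul_index_mem _
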